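/- arXiv:1607.05646 — 3 statements merged into one kernel-verified Lean document; each statement's English description precedes it below -/
import Mathlib

section
/- Let p ≥ 2 and q ≥ 1 be integers and α < 0 a real number. Then the integral ∫₁^∞ e^{(1−p−q)s}·(sinh(e^{αs}))^{−q} ds is finite if and only if α > (1−p−q)/q. -/
open MeasureTheory Real Set

private lemma sinh_le_three_mul {x : ℝ} (hx0 : 0 ≤ x) (hx1 : x ≤ 1) :
    Real.sinh x ≤ 3 * x := by
  rw [Real.sinh_eq]
  have h1 : 1 + (-(2*x)) ≤ Real.exp (-(2*x)) := by
    linarith [Real.add_one_le_exp (-(2*x))]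
  have h2 : Real.exp x ≤ Real.exp 1 := Real.exp_le_exp.2 hx1
  have h3 : Real.exp 1 < 2.7182818286 := Real.exp_one_lt_d9
  have h4 : Real.exp (-(2*x)) = Real.exp (-x) * Real.exp (-x) := by
    rw [← Real.exp_add]; ring_nf
  have h5 : Real.exp (-x) * Real.exp x = 1 := by
    rw [← Real.exp_add]; simp
  have h6 : 0 < Real.exp (-x) := Real.exp_pos _
  nlinarith [Real.exp_pos x]

/-- The hyperbolic test integral `∫₁^∞ e^{(1-p-q)s} sinh(e^{αs})^{-q} ds` is finite
iff `α > (1-p-q)/q`. -/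
theorem hyperbolic_test_integral_finite_iff (p q : ℕ) (hp : 2 ≤ p) (hq : 1 ≤ q)
    (α : ℝ) (hα : α < 0) :
    MeasureTheory.IntegrableOn
        (fun s : ℝ => Real.exp (((1:ℝ) - p - q) * s) *
          Real.sinh (Real.exp (α * s)) ^ (-(q:ℝ))) (Set.Ici 1) ↔
      α > ((1:ℝ) - p - q) / q := by
  have hq' : (0:ℝ) < q := by exact_mod_cast hq
  set c : ℝ := (1:ℝ) - p - q with hc
  set β : ℝ := c - q * α with hβ
  -- the RHS is equivalent to β < 0
  have hrhs : (α > c / q) ↔ β < 0 := by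
    rw [gt_iff_lt, div_lt_iff₀ hq']
    constructor <;> intro h <;> [skip; skip] <;> simp only [hβ] at * <;> nlinarith
  rw [hrhs]
  -- basic facts about the integrand
  have hxpos : ∀ s : ℝ, 0 < Real.exp (α * s) := fun s => Real.exp_pos _
  have hsinhpos : ∀ s : ℝ, 0 < Real.sinh (Real.exp (α * s)) := fun s =>
    Real.sinh_pos_iff.2 (hxpos s)
  have hcont : Continuous (fun s : ℝ => Real.exp (c * s) *
      Real.sinh (Real.exp (α * s)) ^ (-(q:ℝ))) := by
    apply Continuous.mul
    · exact Real.continuous_exp.comp (continuous_const.mul continuous_id)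
    · exact (Real.continuous_sinh.comp
        (Real.continuous_exp.comp (continuous_const.mul continuous_id))).rpow_const
        (fun s => Or.inl (ne_of_gt (hsinhpos s)))
  have hxle : ∀ s : ℝ, s ∈ Set.Ici (1:ℝ) → Real.exp (α * s) ≤ 1 := by
    intro s hs
    rw [Set.mem_Ici] at hs
    rw [Real.exp_le_one_iff]
    nlinarith
  -- key rewriting : exp(αs) ^ (-q) = exp (-q*α*s)
  have hpow : ∀ s : ℝ, Real.exp (α * s) ^ (-(q:ℝ)) = Real.exp (-(q:ℝ) * (α * s)) := by
    intro s
    rw [← Real.exp_mul]; ring_nf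
  constructor
  · -- integrable → β < 0
    intro hint
    by_contra hβ0
    push_neg at hβ0
    -- lower bound : 3^{-q} ≤ integrand on Ici 1
    have hlow : ∀ s : ℝ, s ∈ Set.Ici (1:ℝ) →
        ‖((3:ℝ) ^ (-(q:ℝ)))‖ ≤ Real.exp (c * s) *
          Real.sinh (Real.exp (α * s)) ^ (-(q:ℝ)) := by
      intro s hs
      have hs1 : (1:ℝ) ≤ s := hs
      have hx1 : Real.exp (α * s) ≤ 1 := hxle s hs
      have hsinhle : Real.sinh (Real.exp (α * s)) ≤ 3 * Real.exp (α * s) :=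
        sinh_le_three_mul (le_of_lt (hxpos s)) hx1
      have h1 : (3 * Real.exp (α * s)) ^ (-(q:ℝ)) ≤
          Real.sinh (Real.exp (α * s)) ^ (-(q:ℝ)) :=
        Real.rpow_le_rpow_of_nonpos (hsinhpos s) hsinhle (neg_nonpos.2 hq'.le)
      have h2 : (3 * Real.exp (α * s)) ^ (-(q:ℝ)) =
          (3:ℝ) ^ (-(q:ℝ)) * Real.exp (-(q:ℝ) * (α * s)) := by
        rw [Real.mul_rpow (by norm_num) (le_of_lt (hxpos s)), hpow]
      have h3 : Real.exp (c * s) * ((3:ℝ) ^ (-(q:ℝ)) * Real.exp (-(q:ℝ) * (α * s)))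
          = (3:ℝ) ^ (-(q:ℝ)) * Real.exp (β * s) := by
        rw [hβ, mul_comm (Real.exp (c * s)), mul_assoc, ← Real.exp_add]
        ring_nf
      have h4 : (1:ℝ) ≤ Real.exp (β * s) := by
        rw [Real.one_le_exp_iff]
        positivity
      have h5 : (3:ℝ) ^ (-(q:ℝ)) ≤ (3:ℝ) ^ (-(q:ℝ)) * Real.exp (β * s) := by
        nlinarith [Real.rpow_pos_of_pos (show (0:ℝ) < 3 by norm_num) (-(q:ℝ))]
      calc ‖((3:ℝ) ^ (-(q:ℝ)))‖ = (3:ℝ) ^ (-(q:ℝ)) := by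
            rw [Real.norm_eq_abs, abs_of_pos (by positivity)]
        _ ≤ (3:ℝ) ^ (-(q:ℝ)) * Real.exp (β * s) := h5
        _ = Real.exp (c * s) * ((3:ℝ) ^ (-(q:ℝ)) * Real.exp (-(q:ℝ) * (α * s))) := h3.symm
        _ ≤ Real.exp (c * s) * Real.sinh (Real.exp (α * s)) ^ (-(q:ℝ)) := by
            rw [← h2] at *
            exact mul_le_mul_of_nonneg_left h1 (le_of_lt (Real.exp_pos _))
    have hconst : IntegrableOn (fun _ : ℝ => ((3:ℝ) ^ (-(q:ℝ)))) (Set.Ici 1) := by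
      apply hint.mono' aestronglyMeasurable_const
      exact (ae_restrict_iff' measurableSet_Ici).2 (Filter.Eventually.of_forall hlow)
    rw [integrableOn_const_iff] at hconst
    rcases hconst with h | h
    · exact absurd (enorm_eq_zero.1 h) (ne_of_gt (Real.rpow_pos_of_pos (by norm_num) _))
    · rw [Real.volume_Ici] at h
      exact absurd h (lt_irrefl _)
  · -- β < 0 → integrable
    intro hβ0
    have hg : IntegrableOn (fun s : ℝ => Real.exp (β * s)) (Set.Ici 1) := by
      rw [integrableOn_Ici_iff_integrableOn_Ioi]
      have := exp_neg_integrableOn_Ioi 1 (show (0:ℝ) < -β by linarith)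
      convert this using 2 with s
      · rfl
      ring_nf
    apply hg.mono' (hcont.aestronglyMeasurable.restrict)
    rw [ae_restrict_iff' measurableSet_Ici]
    apply Filter.Eventually.of_forall
    intro s hs
    have hx1 : Real.exp (α * s) ≤ 1 := hxle s hs
    have hself : Real.exp (α * s) < Real.sinh (Real.exp (α * s)) :=
      Real.self_lt_sinh_iff.2 (hxpos s)
    have h1 : Real.sinh (Real.exp (α * s)) ^ (-(q:ℝ)) ≤
        Real.exp (α * s) ^ (-(q:ℝ)) :=
      Real.rpow_le_rpow_of_nonpos (hxpos s) (le_of_lt hself) (neg_nonpos.2 hq'.le)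
    have h2 : Real.exp (c * s) * Real.exp (α * s) ^ (-(q:ℝ)) = Real.exp (β * s) := by
      rw [hpow, ← Real.exp_add, hβ]; ring_nf
    have hpos : 0 < Real.exp (c * s) * Real.sinh (Real.exp (α * s)) ^ (-(q:ℝ)) := by
      apply mul_pos (Real.exp_pos _) (Real.rpow_pos_of_pos (hsinhpos s) _)
    rw [Real.norm_eq_abs, abs_of_pos hpos]
    calc Real.exp (c * s) * Real.sinh (Real.exp (α * s)) ^ (-(q:ℝ))
        ≤ Real.exp (c * s) * Real.exp (α * s) ^ (-(q:ℝ)) :=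
          mul_le_mul_of_nonneg_left h1 (le_of_lt (Real.exp_pos _))
      _ = Real.exp (β * s) := h2
end

section
/- Let p ≥ 2 and q ≥ 1 be integers and α < 0 a real number. Then the integral ∫₁^∞ (sinh s)^{p−1}·(cosh s)^{q}·(∫₀^{exp(αs)} (sinh r)^{q−1} dr) ds is finite if and only if α < (1−p−q)/q. -/
open MeasureTheory Real Set

lemma sinh_le_mul_exp {r : ℝ} (hr : 0 ≤ r) : Real.sinh r ≤ r * Real.exp r := by
  rw [Real.sinh_eq]
  have h : -(2*r) + 1 ≤ Real.exp (-(2*r)) := Real.add_one_le_exp (-(2*r))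
  have hE : (0:ℝ) < Real.exp r := Real.exp_pos r
  have h3 : Real.exp (-(2*r)) = ((Real.exp r)⁻¹)^2 := by
    rw [show -(2*r) = (-r) + (-r) by ring, Real.exp_add, Real.exp_neg, sq]
  rw [h3] at h
  rw [Real.exp_neg]
  have hinv : (Real.exp r)⁻¹ * Real.exp r = 1 := inv_mul_cancel₀ (ne_of_gt hE)
  have hone : ((Real.exp r)⁻¹)^2 * (Real.exp r)^2 = 1 := by
    field_simp
  nlinarith [mul_le_mul_of_nonneg_right h (sq_nonneg (Real.exp r)), mul_pos hE hE]

lemma self_le_sinh' {r : ℝ} (hr : 0 ≤ r) : r ≤ Real.sinh r := by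
  rcases eq_or_lt_of_le hr with h | h
  · simp [← h]
  · exact le_of_lt (Real.self_lt_sinh_iff.mpr h)

lemma inner_lb (q : ℕ) (hq : 1 ≤ q) {ε : ℝ} (h0 : 0 < ε) :
    ε ^ q / q ≤ ∫ r in (0:ℝ)..ε, Real.sinh r ^ (q-1) := by
  have key : ∫ r in (0:ℝ)..ε, r ^ (q-1) ≤ ∫ r in (0:ℝ)..ε, Real.sinh r ^ (q-1) := by
    apply intervalIntegral.integral_mono_on h0.le
    · exact (continuous_pow _).intervalIntegrable _ _
    · exact ((Real.continuous_sinh).pow _).intervalIntegrable _ _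
    · intro x hx
      exact pow_le_pow_left₀ hx.1 (self_le_sinh' hx.1) _
  have hp : ∫ r in (0:ℝ)..ε, r ^ (q-1) = ε ^ q / q := by
    rw [integral_pow, Nat.sub_add_cancel hq, Nat.cast_sub hq,
      zero_pow (by omega : q ≠ 0)]
    ring
  linarith

lemma inner_ub (q : ℕ) (hq : 1 ≤ q) {ε : ℝ} (h0 : 0 < ε) (h1 : ε ≤ 1) :
    (∫ r in (0:ℝ)..ε, Real.sinh r ^ (q-1)) ≤ Real.exp 1 ^ (q-1) * (ε ^ q / q) := by
  have key : ∫ r in (0:ℝ)..ε, Real.sinh r ^ (q-1)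
      ≤ ∫ r in (0:ℝ)..ε, Real.exp 1 ^ (q-1) * r ^ (q-1) := by
    apply intervalIntegral.integral_mono_on h0.le
    · exact ((Real.continuous_sinh).pow _).intervalIntegrable _ _
    · exact (continuous_const.mul (continuous_pow _)).intervalIntegrable _ _
    · intro x hx
      have hx0 := hx.1
      have hx1 : x ≤ 1 := le_trans hx.2 h1
      have h4 : Real.sinh x ≤ Real.exp 1 * x := by
        have := sinh_le_mul_exp hx0
        have h5 : Real.exp x ≤ Real.exp 1 := Real.exp_le_exp.mpr hx1
        nlinarith [Real.exp_pos x]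
      calc Real.sinh x ^ (q-1) ≤ (Real.exp 1 * x) ^ (q-1) :=
            pow_le_pow_left₀ (Real.sinh_nonneg_iff.mpr hx0) h4 _
        _ = Real.exp 1 ^ (q-1) * x ^ (q-1) := mul_pow _ _ _
  have hp : ∫ r in (0:ℝ)..ε, Real.exp 1 ^ (q-1) * r ^ (q-1)
      = Real.exp 1 ^ (q-1) * (ε ^ q / q) := by
    rw [intervalIntegral.integral_const_mul, integral_pow, Nat.sub_add_cancel hq,
      Nat.cast_sub hq, zero_pow (by omega : q ≠ 0)]
    ring
  linarith

lemma exp_decomp (p q : ℕ) (hp : 2 ≤ p) (α s : ℝ) :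
    Real.exp ((((p:ℝ)-1) + q + q*α)*s)
      = Real.exp s ^ (p-1) * Real.exp s ^ q * Real.exp (α*s) ^ q := by
  rw [← Real.exp_nat_mul, ← Real.exp_nat_mul, ← Real.exp_nat_mul, ← Real.exp_add,
    ← Real.exp_add]
  congr 1
  rw [Nat.cast_sub (by omega : 1 ≤ p)]
  push_cast
  ring

lemma exp_facts {s : ℝ} (hs : 1 ≤ s) :
    Real.exp s / 4 ≤ Real.sinh s ∧ Real.sinh s ≤ Real.exp s ∧
    Real.exp s / 2 ≤ Real.cosh s ∧ Real.cosh s ≤ Real.exp s := by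
  have hE : (0:ℝ) < Real.exp s := Real.exp_pos s
  have hE2 : (2:ℝ) ≤ Real.exp s := by
    have := Real.exp_one_gt_d9
    have h5 : Real.exp 1 ≤ Real.exp s := Real.exp_le_exp.mpr hs
    linarith
  have hinv : (Real.exp s)⁻¹ * Real.exp s = 1 := inv_mul_cancel₀ (ne_of_gt hE)
  have hinvle : (Real.exp s)⁻¹ ≤ 1/2 := by
    rw [inv_le_comm₀ hE (by norm_num)] at *
    linarith
  have hinvpos : (0:ℝ) < (Real.exp s)⁻¹ := inv_pos.mpr hE
  refine ⟨?_, ?_, ?_, ?_⟩ <;>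
    simp only [Real.sinh_eq, Real.cosh_eq, Real.exp_neg] <;> nlinarith

lemma main_lb (p q : ℕ) (hp : 2 ≤ p) (hq : 1 ≤ q) (α : ℝ) (hα : α < 0)
    {s : ℝ} (hs : 1 ≤ s) :
    Real.exp ((((p:ℝ)-1) + q + q*α)*s) / (4^(p-1)*2^q*q)
      ≤ Real.sinh s ^ (p-1) * Real.cosh s ^ q *
          ∫ r in (0:ℝ)..Real.exp (α*s), Real.sinh r ^ (q-1) := by
  obtain ⟨h1, h2, h3, h4⟩ := exp_facts hs
  have hε0 : (0:ℝ) < Real.exp (α*s) := Real.exp_pos _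
  have hinner := inner_lb q hq hε0
  have hq0 : (0:ℝ) < q := by exact_mod_cast hq
  have hE : (0:ℝ) < Real.exp s := Real.exp_pos s
  have hsinh : (Real.exp s/4)^(p-1) ≤ Real.sinh s^(p-1) :=
    pow_le_pow_left₀ (by positivity) h1 _
  have hcosh : (Real.exp s/2)^q ≤ Real.cosh s^q :=
    pow_le_pow_left₀ (by positivity) h3 _
  have heq : Real.exp ((((p:ℝ)-1) + q + q*α)*s) / (4^(p-1)*2^q*q)
      = (Real.exp s/4)^(p-1) * (Real.exp s/2)^q * (Real.exp (α*s)^q / q) := by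
    rw [exp_decomp p q hp, div_pow, div_pow]
    field_simp
  rw [heq]
  apply mul_le_mul (mul_le_mul hsinh hcosh (by positivity) (by positivity)) hinner
    (by positivity) (by positivity)

lemma main_ub (p q : ℕ) (hp : 2 ≤ p) (hq : 1 ≤ q) (α : ℝ) (hα : α < 0)
    {s : ℝ} (hs : 1 ≤ s) :
    Real.sinh s ^ (p-1) * Real.cosh s ^ q *
        (∫ r in (0:ℝ)..Real.exp (α*s), Real.sinh r ^ (q-1))
      ≤ Real.exp 1 ^ (q-1) / q * Real.exp ((((p:ℝ)-1) + q + q*α)*s) := by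
  obtain ⟨h1, h2, h3, h4⟩ := exp_facts hs
  have hε0 : (0:ℝ) < Real.exp (α*s) := Real.exp_pos _
  have hε1 : Real.exp (α*s) ≤ 1 := by
    rw [show (1:ℝ) = Real.exp 0 by simp]
    exact Real.exp_le_exp.mpr (by nlinarith)
  have hinner := inner_ub q hq hε0 hε1
  have hq0 : (0:ℝ) < q := by exact_mod_cast hq
  have hE : (0:ℝ) < Real.exp s := Real.exp_pos s
  have hsh0 : (0:ℝ) ≤ Real.sinh s := Real.sinh_nonneg_iff.mpr (by linarith)
  have hch0 : (0:ℝ) ≤ Real.cosh s := le_of_lt (Real.cosh_pos s)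
  have hin0 : (0:ℝ) ≤ ∫ r in (0:ℝ)..Real.exp (α*s), Real.sinh r ^ (q-1) := by
    have := inner_lb q hq hε0
    have : (0:ℝ) ≤ Real.exp (α*s)^q / q := by positivity
    linarith [inner_lb q hq hε0]
  have hsinh : Real.sinh s^(p-1) ≤ Real.exp s^(p-1) := pow_le_pow_left₀ hsh0 h2 _
  have hcosh : Real.cosh s^q ≤ Real.exp s^q := pow_le_pow_left₀ hch0 h4 _
  have heq : Real.exp 1 ^ (q-1) / q * Real.exp ((((p:ℝ)-1) + q + q*α)*s)
      = Real.exp s^(p-1) * Real.exp s^q * (Real.exp 1 ^ (q-1) * (Real.exp (α*s)^q / q)) := by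
    rw [exp_decomp p q hp]
    field_simp
  rw [heq]
  apply mul_le_mul (mul_le_mul hsinh hcosh (by positivity) (by positivity)) hinner hin0
    (by positivity)

lemma f_cont (p q : ℕ) (α : ℝ) :
    Continuous (fun s : ℝ => Real.sinh s ^ (p-1) * Real.cosh s ^ q *
      ∫ r in (0:ℝ)..Real.exp (α*s), Real.sinh r ^ (q-1)) := by
  apply Continuous.mul
  · exact (Real.continuous_sinh.pow _).mul (Real.continuous_cosh.pow _)
  · exact (intervalIntegral.continuous_primitive
      (fun a b => ((Real.continuous_sinh.pow _)).intervalIntegrable a b) 0).comp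
      (Real.continuous_exp.comp (continuous_const.mul continuous_id))

/-- The hyperbolic tube domain volume integral is finite iff `α < (1-p-q)/q`. -/
theorem hyperbolic_volume_integral_finite_iff (p q : ℕ) (hp : 2 ≤ p) (hq : 1 ≤ q)
    (α : ℝ) (hα : α < 0) :
    MeasureTheory.IntegrableOn
        (fun s : ℝ => Real.sinh s ^ (p - 1) * Real.cosh s ^ q *
          ∫ r in (0:ℝ)..Real.exp (α * s), Real.sinh r ^ (q - 1)) (Set.Ici 1) ↔
      α < ((1:ℝ) - p - q) / q := by
  have hq0 : (0:ℝ) < q := by exact_mod_cast hq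
  set β : ℝ := ((p:ℝ)-1) + q + q*α with hβdef
  have hiff : (α < ((1:ℝ) - p - q) / q) ↔ β < 0 := by
    rw [lt_div_iff₀ hq0]
    constructor <;> intro h <;> nlinarith
  rw [hiff]
  constructor
  · intro hint
    by_contra hβ0
    push_neg at hβ0
    have hcpos : (0:ℝ) < 1 / (4^(p-1)*2^q*(q:ℝ)) := by positivity
    have hconst : MeasureTheory.IntegrableOn
        (fun _ : ℝ => 1 / (4^(p-1)*2^q*(q:ℝ))) (Set.Ici 1) := by
      apply MeasureTheory.Integrable.mono' hint aestronglyMeasurable_const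
      filter_upwards [MeasureTheory.ae_restrict_mem measurableSet_Ici] with s hs
      have hs1 : (1:ℝ) ≤ s := hs
      have hlb := main_lb p q hp hq α hα hs1
      have h1 : (1:ℝ) ≤ Real.exp (β*s) := Real.one_le_exp (by nlinarith)
      rw [Real.norm_eq_abs, abs_of_pos hcpos]
      calc 1 / (4^(p-1)*2^q*(q:ℝ)) ≤ Real.exp (β*s) / (4^(p-1)*2^q*(q:ℝ)) := by
            gcongr
        _ ≤ _ := hlb
    rw [MeasureTheory.integrableOn_const_iff] at hconst
    rcases hconst with h | h
    · exact absurd (enorm_eq_zero.mp h) (ne_of_gt hcpos)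
    · rw [Real.volume_Ici] at h
      exact absurd h (lt_irrefl _)
  · intro hβ0
    have hg : MeasureTheory.IntegrableOn
        (fun s : ℝ => Real.exp 1 ^ (q-1) / q * Real.exp (β*s)) (Set.Ici 1) := by
      rw [integrableOn_Ici_iff_integrableOn_Ioi]
      apply MeasureTheory.Integrable.const_mul
      have := exp_neg_integrableOn_Ioi 1 (neg_pos.mpr hβ0)
      simp only [neg_neg] at this
      exact this
    apply MeasureTheory.Integrable.mono' hg
      ((f_cont p q α).aestronglyMeasurable.restrict)
    filter_upwards [MeasureTheory.ae_restrict_mem measurableSet_Ici] with s hs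
    have hs1 : (1:ℝ) ≤ s := hs
    have hlb := main_lb p q hp hq α hα hs1
    have hub := main_ub p q hp hq α hα hs1
    have hnn : (0:ℝ) ≤ Real.sinh s ^ (p-1) * Real.cosh s ^ q *
        ∫ r in (0:ℝ)..Real.exp (α*s), Real.sinh r ^ (q-1) := by
      have : (0:ℝ) ≤ Real.exp (β*s) / (4^(p-1)*2^q*(q:ℝ)) := by positivity
      linarith
    rw [Real.norm_eq_abs, abs_of_nonneg hnn]
    exact hub
end

section
/- Let q ≥ 1 be an integer, s₀ > 0, f : [s₀,∞) → (0,∞) continuously differentiable, and ξ : (0,∞) → (0,∞) continuously differentiable with ξ'(r) ≥ 1 for all r > 0. Assume that ξ'(f(s)) → 1 as s → ∞ and that ∫_{s₀}^∞ (|f'(s)|/ξ(f(s)))·|1 − ξ'(f(s))²| ds < ∞. Define L(s) = f'(s)/(ξ(f(s))·ξ'(f(s))). Then the function t ↦ exp(−q∫_{s₀}^t L(s) ds)·ξ(f(t))^{q} converges to a finite positive limit as t → ∞. -/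
open Filter MeasureTheory Set intervalIntegral

/-- Under the hypotheses `ξ'(f(s)) → 1` and `∫ (|f'|/ξ(f)) |1 - ξ'(f)²| < ∞`, the quantity
`exp(-q ∫_{s₀}^t L) · ξ(f(t))^q`, with `L = f'/(ξ(f) ξ'(f))`, converges to a finite
positive limit as `t → ∞`. -/
theorem exp_int_L_xi_f_converges (q : ℕ) (hq : 1 ≤ q) (s₀ : ℝ) (hs₀ : 0 < s₀)
    (f ξ : ℝ → ℝ)
    (hfC : ContDiff ℝ 1 f) (hfpos : ∀ s ≥ s₀, 0 < f s)
    (hξpos : ∀ r > (0:ℝ), 0 < ξ r)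
    (hξC : ∀ r > (0:ℝ), ContDiffAt ℝ 1 ξ r)
    (hξ' : ∀ r > (0:ℝ), 1 ≤ deriv ξ r)
    (hlim : Filter.Tendsto (fun s => deriv ξ (f s)) Filter.atTop (nhds 1))
    (hint : MeasureTheory.IntegrableOn
      (fun s => |deriv f s| / ξ (f s) * |1 - (deriv ξ (f s)) ^ 2|) (Set.Ici s₀)) :
    ∃ c : ℝ, 0 < c ∧ Filter.Tendsto
      (fun t => Real.exp (-(q:ℝ) * ∫ s in s₀..t, deriv f s / (ξ (f s) * deriv ξ (f s))) *
        ξ (f t) ^ q)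
      Filter.atTop (nhds c) := by
  -- notation
  set A : ℝ → ℝ := fun s => deriv f s / (ξ (f s) * deriv ξ (f s)) with hA
  set B : ℝ → ℝ := fun s => (ξ (f s))⁻¹ * (deriv ξ (f s) * deriv f s) with hB
  set D : ℝ → ℝ := fun s => B s - A s with hD
  -- basic continuity facts
  have hfc : Continuous f := hfC.continuous
  have hf'c : Continuous (deriv f) := hfC.continuous_deriv le_rfl
  have hξOn : ContDiffOn ℝ 1 ξ (Set.Ioi 0) := fun r hr => (hξC r hr).contDiffWithinAt
  have hξcOn : ContinuousOn ξ (Set.Ioi 0) := hξOn.continuousOn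
  have hξ'cOn : ContinuousOn (deriv ξ) (Set.Ioi 0) :=
    hξOn.continuousOn_deriv_of_isOpen isOpen_Ioi le_rfl
  have hmaps : ∀ s ∈ Set.Ici s₀, f s ∈ Set.Ioi (0:ℝ) := fun s hs => hfpos s hs
  have hxpos : ∀ s ∈ Set.Ici s₀, 0 < ξ (f s) := fun s hs => hξpos _ (hfpos s hs)
  have hypos : ∀ s ∈ Set.Ici s₀, 1 ≤ deriv ξ (f s) := fun s hs => hξ' _ (hfpos s hs)
  have hξf : ContinuousOn (fun s => ξ (f s)) (Set.Ici s₀) :=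
    hξcOn.comp hfc.continuousOn hmaps
  have hξ'f : ContinuousOn (fun s => deriv ξ (f s)) (Set.Ici s₀) :=
    hξ'cOn.comp hfc.continuousOn hmaps
  have hAc : ContinuousOn A (Set.Ici s₀) := by
    apply hf'c.continuousOn.div (hξf.mul hξ'f)
    intro s hs
    exact ne_of_gt (mul_pos (hxpos s hs) (lt_of_lt_of_le one_pos (hypos s hs)))
  have hBc : ContinuousOn B (Set.Ici s₀) := by
    apply ContinuousOn.mul (hξf.inv₀ fun s hs => ne_of_gt (hxpos s hs))
      (hξ'f.mul hf'c.continuousOn)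
  have hDc : ContinuousOn D (Set.Ici s₀) := hBc.sub hAc
  -- bound |D| by the integrand
  have hbound : ∀ s ∈ Set.Ici s₀,
      ‖D s‖ ≤ |deriv f s| / ξ (f s) * |1 - (deriv ξ (f s)) ^ 2| := by
    intro s hs
    have hx := hxpos s hs
    have hy := hypos s hs
    have hy0 : (0:ℝ) < deriv ξ (f s) := lt_of_lt_of_le one_pos hy
    have hid : D s = deriv f s / ξ (f s) * (((deriv ξ (f s))^2 - 1) / deriv ξ (f s)) := by
      simp only [hD, hB, hA]
      field_simp
    rw [Real.norm_eq_abs, hid, abs_mul, abs_div, abs_div, abs_of_pos hx, abs_of_pos hy0]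
    have h1 : |1 - (deriv ξ (f s))^2| = |(deriv ξ (f s))^2 - 1| := abs_sub_comm _ _
    rw [h1]
    have : |(deriv ξ (f s))^2 - 1| / deriv ξ (f s) ≤ |(deriv ξ (f s))^2 - 1| := by
      apply div_le_self (abs_nonneg _) hy
    calc |deriv f s| / ξ (f s) * (|(deriv ξ (f s))^2 - 1| / deriv ξ (f s))
        ≤ |deriv f s| / ξ (f s) * |(deriv ξ (f s))^2 - 1| := by
          apply mul_le_mul_of_nonneg_left this (div_nonneg (abs_nonneg _) hx.le)
      _ = |deriv f s| / ξ (f s) * |(deriv ξ (f s))^2 - 1| := rfl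
  -- integrability of D on Ici s₀
  have hDint : MeasureTheory.IntegrableOn D (Set.Ici s₀) := by
    apply MeasureTheory.Integrable.mono' hint
      (hDc.aestronglyMeasurable measurableSet_Ici)
    exact (MeasureTheory.ae_restrict_iff' measurableSet_Ici).2
      (Filter.Eventually.of_forall hbound)
  -- FTC for log (ξ ∘ f)
  have hHasD : ∀ s ∈ Set.Ici s₀, HasDerivAt (fun u => Real.log (ξ (f u))) (B s) s := by
    intro s hs
    have hfd : HasDerivAt f (deriv f s) s := (hfC.differentiable one_ne_zero s).hasDerivAt
    have hξd : HasDerivAt ξ (deriv ξ (f s)) (f s) :=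
      ((hξC _ (hfpos s hs)).differentiableAt one_ne_zero).hasDerivAt
    have hcomp : HasDerivAt (fun u => ξ (f u)) (deriv ξ (f s) * deriv f s) s :=
      hξd.comp s hfd
    have hlog : HasDerivAt Real.log (ξ (f s))⁻¹ (ξ (f s)) :=
      Real.hasDerivAt_log (ne_of_gt (hxpos s hs))
    exact hlog.comp s hcomp
  -- the key identity for t ≥ s₀
  have hkey : ∀ t ≥ s₀,
      Real.exp (-(q:ℝ) * ∫ s in s₀..t, A s) * ξ (f t) ^ q
        = Real.exp ((q:ℝ) * ∫ s in s₀..t, D s) * ξ (f s₀) ^ q := by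
    intro t ht
    have hsub : Set.uIcc s₀ t ⊆ Set.Ici s₀ := by
      rw [Set.uIcc_of_le ht]
      exact Set.Icc_subset_Ici_self
    have hAint : IntervalIntegrable A volume s₀ t :=
      (hAc.mono hsub).intervalIntegrable
    have hBint : IntervalIntegrable B volume s₀ t :=
      (hBc.mono hsub).intervalIntegrable
    have hftc : ∫ s in s₀..t, B s = Real.log (ξ (f t)) - Real.log (ξ (f s₀)) := by
      apply intervalIntegral.integral_eq_sub_of_hasDerivAt
        (fun s hs => hHasD s (hsub hs)) hBint
    have hDeq : ∫ s in s₀..t, D s = (∫ s in s₀..t, B s) - ∫ s in s₀..t, A s :=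
      intervalIntegral.integral_sub hBint hAint
    rw [hDeq, hftc]
    have hxt : 0 < ξ (f t) := hxpos t ht
    have hxs : 0 < ξ (f s₀) := hxpos s₀ Set.self_mem_Ici
    rw [mul_sub, mul_sub, Real.exp_sub, Real.exp_sub]
    rw [Real.exp_nat_mul, Real.exp_nat_mul, Real.exp_log hxt, Real.exp_log hxs]
    have h1 : Real.exp ((q:ℝ) * ∫ s in s₀..t, A s) ≠ 0 := Real.exp_ne_zero _
    have h2 : (ξ (f s₀) : ℝ) ^ q ≠ 0 := pow_ne_zero _ (ne_of_gt hxs)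
    field_simp [Real.exp_neg]
    rw [← Real.exp_add, neg_add_cancel, Real.exp_zero]
  -- limit of ∫ D
  have hItend : Filter.Tendsto (fun t => ∫ s in s₀..t, D s) Filter.atTop
      (nhds (∫ s in Set.Ioi s₀, D s)) :=
    MeasureTheory.intervalIntegral_tendsto_integral_Ioi s₀
      (hDint.mono_set Set.Ioi_subset_Ici_self) Filter.tendsto_id
  set c : ℝ := Real.exp ((q:ℝ) * ∫ s in Set.Ioi s₀, D s) * ξ (f s₀) ^ q with hc
  refine ⟨c, mul_pos (Real.exp_pos _) (pow_pos (hxpos s₀ Set.self_mem_Ici) q), ?_⟩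
  have htend : Filter.Tendsto (fun t => Real.exp ((q:ℝ) * ∫ s in s₀..t, D s) * ξ (f s₀) ^ q)
      Filter.atTop (nhds c) := by
    apply Filter.Tendsto.mul_const
    exact (Real.continuous_exp.tendsto _).comp (hItend.const_mul _)
  apply htend.congr'
  filter_upwards [Filter.eventually_ge_atTop s₀] with t ht
  exact (hkey t ht).symm
end
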